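/- Let U be an invertible adjointable operator on H with U*U W_j ⊆ W_j for all j and U commuting with C and C'. If {UW_j, Λ_j P_{W_j} U*, v_j}_{j∈J} is a (C,C')-controlled K-g-fusion frame for H with bounds A, B, then {W_j, Λ_j, v_j}_{j∈J} is a (C,C')-controlled (U⁻¹KU)-g-fusion frame for H with bounds A/‖U‖² and B‖U⁻¹‖². -/

import Mathlib

open scoped RightActions

noncomputable section

/-- The class `CStarModule` as it stood in Mathlib of December 2024 (right `A`-action through
`Aᵐᵒᵖ`, inner product `A`-linear on the right in the second argument). -/
class CStarModuleOld (A E : Type*) [NonUnitalSemiring A] [StarRing A] [Module ℂ A]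
    [AddCommGroup E] [Module ℂ E] [PartialOrder A] [SMul Aᵐᵒᵖ E] [Norm A] [Norm E]
    extends Inner A E where
  inner_add_right {x} {y} {z} : inner x (y + z) = inner x y + inner x z
  inner_self_nonneg {x} : 0 ≤ inner x x
  inner_self {x} : inner x x = 0 ↔ x = 0
  inner_op_smul_right {a : A} {x y : E} : inner x (y <• a) = inner x y * a
  inner_smul_right_complex {z : ℂ} {x} {y} : inner x (z • y) = z • inner x y
  star_inner x y : star (inner x y) = inner y x
  norm_eq_sqrt_norm_inner_self x : ‖x‖ = √‖inner x x‖

variable {A : Type*} [CStarAlgebra A] [PartialOrder A] [StarOrderedRing A]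
variable {H : Type*} [NormedAddCommGroup H] [NormedSpace ℂ H] [SMul Aᵐᵒᵖ H] [CStarModuleOld A H]
variable {J : Type*} {Hs : J → Type*} [∀ j, NormedAddCommGroup (Hs j)]
  [∀ j, NormedSpace ℂ (Hs j)] [∀ j, SMul Aᵐᵒᵖ (Hs j)] [∀ j, CStarModuleOld A (Hs j)]

namespace CStarModuleOld

section

variable {A E : Type*} [CStarAlgebra A] [PartialOrder A] [StarOrderedRing A]
  [NormedAddCommGroup E] [NormedSpace ℂ E] [SMul Aᵐᵒᵖ E] [CStarModuleOld A E]

def innerAddHom (x : E) : E →+ A :=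
  AddMonoidHom.mk' (fun y => inner A x y) (fun _ _ => inner_add_right)

lemma inner_sub_right {x y z : E} : inner A x (y - z) = inner A x y - inner A x z :=
  map_sub (innerAddHom (A := A) x) y z

@[simp] lemma inner_zero_right {x : E} : inner A x 0 = 0 :=
  map_zero (innerAddHom (A := A) x)

lemma inner_sub_left {x y z : E} : inner A (x - y) z = inner A x z - inner A y z := by
  rw [← star_inner z (x - y), inner_sub_right, star_sub, star_inner, star_inner]

@[simp] lemma inner_zero_left {x : E} : inner A 0 x = 0 := by
  rw [← star_inner x 0, inner_zero_right, star_zero]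

lemma inner_op_smul_left {a : A} {x y : E} : inner A (x <• a) y = star a * inner A x y := by
  rw [← star_inner y (x <• a), inner_op_smul_right, star_mul, star_inner]

lemma inner_smul_right_real {z : ℝ} {x y : E} : inner A x (z • y) = z • inner A x y := by
  have h₁ : z • y = (z : ℂ) • y := by simp
  rw [h₁, inner_smul_right_complex]
  simp

lemma inner_smul_left_real {z : ℝ} {x y : E} : inner A (z • x) y = z • inner A x y := by
  rw [← star_inner y (z • x), inner_smul_right_real, star_smul, star_inner]
  simp

lemma norm_sq_eq {x : E} : ‖x‖ ^ 2 = ‖inner A x x‖ := by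
  rw [norm_eq_sqrt_norm_inner_self (A := A) x, Real.sq_sqrt (norm_nonneg _)]

lemma inner_mul_inner_swap_le {x y : E} :
    inner A y x * inner A x y ≤ ‖x‖ ^ 2 • inner A y y := by
  rcases eq_or_ne x 0 with h | h
  · simp [h]
  · have hx : 0 < ‖x‖ := norm_pos_iff.mpr h
    have hsa : star (inner A x y) = inner A y x := star_inner x y
    have key : (0 : A) ≤ inner A (x <• inner A x y - (‖x‖ ^ 2) • y)
        (x <• inner A x y - (‖x‖ ^ 2) • y) := inner_self_nonneg
    have key2 : (0 : A) ≤ inner A y x * (inner A x x * inner A x y)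
        - inner A y x * ((‖x‖ ^ 2) • inner A x y)
        - ((‖x‖ ^ 2) • (inner A y x * inner A x y) - (‖x‖ ^ 2) • (‖x‖ ^ 2) • inner A y y) := by
      refine le_of_le_of_eq key ?_
      rw [inner_sub_left, inner_sub_right, inner_sub_right, inner_op_smul_left,
        inner_op_smul_left, inner_op_smul_right, inner_smul_left_real, inner_smul_left_real,
        inner_op_smul_right, inner_smul_right_real, inner_smul_right_real, hsa]
    rw [mul_smul_comm] at key2
    have h1 : inner A y x * (inner A x x * inner A x y)
        ≤ (‖x‖ ^ 2) • (inner A y x * inner A x y) := by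
      rw [← hsa, norm_sq_eq (A := A), ← mul_assoc]
      exact CStarAlgebra.star_left_conjugate_le_norm_smul (hb := star_inner x x)
    have h2 : (0 : A) ≤ (‖x‖ ^ 2) • (‖x‖ ^ 2) • inner A y y
        - (‖x‖ ^ 2) • (inner A y x * inner A x y) := by
      have := le_trans key2 (sub_le_sub_right (sub_le_sub_right h1 _) _)
      have e : (‖x‖ ^ 2) • (inner A y x * inner A x y) - (‖x‖ ^ 2) • (inner A y x * inner A x y)
          - ((‖x‖ ^ 2) • (inner A y x * inner A x y) - (‖x‖ ^ 2) • (‖x‖ ^ 2) • inner A y y)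
          = (‖x‖ ^ 2) • (‖x‖ ^ 2) • inner A y y
            - (‖x‖ ^ 2) • (inner A y x * inner A x y) := by abel
      rwa [e] at this
    rw [sub_nonneg] at h2
    exact (smul_le_smul_iff_of_pos_left (pow_pos hx 2)).mp h2

variable (E) in
lemma norm_inner_le {x y : E} : ‖inner A x y‖ ≤ ‖x‖ * ‖y‖ := by
  have h : ‖inner A x y‖ ^ 2 ≤ (‖x‖ * ‖y‖) ^ 2 := by
   calc ‖inner A x y‖ ^ 2 = ‖inner A y x * inner A x y‖ := by rw [← star_inner x y, CStarRing.norm_star_mul_self, pow_two]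
    _ ≤ ‖‖x‖ ^ 2 • inner A y y‖ := CStarAlgebra.norm_le_norm_of_nonneg_of_le
        (by rw [← star_inner x y]; exact star_mul_self_nonneg _) inner_mul_inner_swap_le
    _ = ‖x‖ ^ 2 * ‖y‖ ^ 2 := by rw [norm_smul, ← norm_sq_eq (A := A) (x := y)]; simp
    _ = (‖x‖ * ‖y‖) ^ 2 := by ring
  exact (pow_le_pow_iff_left₀ (norm_nonneg _) (by positivity) (by norm_num)).mp h

end

end CStarModuleOld

namespace AuxCKGFF

open CStarModule

lemma inner_ext {x y : H} (h : ∀ z : H, (inner A x z : A) = inner A y z) : x = y := by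
  have h0 : (inner A (x - y) (x - y) : A) = 0 := by
    rw [CStarModuleOld.inner_sub_left, h (x - y), sub_self]
  exact sub_eq_zero.mp (CStarModuleOld.inner_self.mp h0)

lemma smul_mono {c : ℝ} (hc : 0 ≤ c) {x y : A} (h : x ≤ y) : c • x ≤ c • y :=
  smul_le_smul_of_nonneg_left h hc

/-- Core contraction lemma: if `S` is symmetric with `‖S‖ ≤ 1`, then
`⟪x, S x⟫ ≤ ⟪x, x⟫`. -/
lemma inner_contraction (S : H →L[ℂ] H)
    (hsym : ∀ u v : H, (inner A (S u) v : A) = inner A u (S v)) (hS : ‖S‖ ≤ 1) (x : H) :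
    (inner A x (S x) : A) ≤ inner A x x := by
  have hpow : ∀ (n : ℕ) (u v : H), (inner A ((S ^ n) u) v : A) = inner A u ((S ^ n) v) := by
    intro n
    induction n with
    | zero => intro u v; simp
    | succ n ih =>
      intro u v
      rw [pow_succ]
      simp only [ContinuousLinearMap.mul_apply]
      rw [ih (S u) v, hsym u ((S ^ n) v)]
      congr 1
      have hc : S * S ^ n = S ^ n * S := ((Commute.refl S).pow_right n).eq
      calc S ((S ^ n) v) = (S * S ^ n) v := rfl
        _ = (S ^ n * S) v := by rw [hc]
  set w : ℕ → A := fun n => (inner A x ((S ^ n) x) : A) with hw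
  have hw0 : w 0 = inner A x x := by simp [hw]
  have hwsa : ∀ n, IsSelfAdjoint (w n) := by
    intro n
    show star (w n) = w n
    rw [hw]
    dsimp only
    rw [CStarModuleOld.star_inner, hpow n x x]
  have hnorm : ∀ n : ℕ, ‖(S ^ n) x‖ ≤ ‖x‖ := by
    intro n
    induction n with
    | zero => simp
    | succ n ih =>
      rw [pow_succ']
      calc ‖(S * S ^ n) x‖ = ‖S ((S ^ n) x)‖ := rfl
        _ ≤ ‖S‖ * ‖(S ^ n) x‖ := S.le_opNorm _
        _ ≤ 1 * ‖x‖ := by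
            apply mul_le_mul hS ih (norm_nonneg _) zero_le_one
        _ = ‖x‖ := one_mul _
  have hone : (0 : A) ≤ 1 := by simpa using star_mul_self_nonneg (1 : A)
  have hbound : ∀ n, w n ≤ ‖x‖ ^ 2 • (1 : A) := by
    intro n
    have h1 : w n ≤ algebraMap ℝ A ‖w n‖ := (hwsa n).le_algebraMap_norm_self
    have h2 : ‖w n‖ ≤ ‖x‖ ^ 2 := by
      calc ‖w n‖ ≤ ‖x‖ * ‖(S ^ n) x‖ := CStarModuleOld.norm_inner_le H
        _ ≤ ‖x‖ * ‖x‖ := by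
            exact mul_le_mul_of_nonneg_left (hnorm n) (norm_nonneg x)
        _ = ‖x‖ ^ 2 := (sq ‖x‖).symm
    calc w n ≤ algebraMap ℝ A ‖w n‖ := h1
      _ = ‖w n‖ • (1 : A) := Algebra.algebraMap_eq_smul_one _
      _ ≤ ‖x‖ ^ 2 • (1 : A) := smul_le_smul_of_nonneg_right h2 hone
  have hstep : ∀ n, w n + w n ≤ w 0 + w (2 * n) := by
    intro n
    have h0 : (0 : A) ≤ inner A (x - (S ^ n) x) (x - (S ^ n) x) := CStarModuleOld.inner_self_nonneg
    have hexp : (inner A (x - (S ^ n) x) (x - (S ^ n) x) : A)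
        = w 0 + w (2 * n) - (w n + w n) := by
      have h2n : (inner A ((S ^ n) x) ((S ^ n) x) : A) = w (2 * n) := by
        rw [hpow n x ((S ^ n) x)]
        have : (S ^ n) ((S ^ n) x) = (S ^ (2 * n)) x := by
          rw [two_mul, pow_add]
          rfl
        rw [hw]
        dsimp only
        rw [this]
      have hsnx : (inner A ((S ^ n) x) x : A) = w n := hpow n x x
      rw [CStarModuleOld.inner_sub_left, CStarModuleOld.inner_sub_right,
        CStarModuleOld.inner_sub_right, h2n, hsnx]
      rw [hw0]
      show (inner A x x : A) - w n - (w n - w (2*n)) = w 0 + w (2 * n) - (w n + w n)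
      rw [hw0]
      abel
    rw [hexp] at h0
    exact sub_nonneg.mp h0
  have hkey : ∀ k : ℕ, w 1 ≤ (1 - ((2:ℝ)⁻¹) ^ k) • w 0 + ((2:ℝ)⁻¹) ^ k • w (2 ^ k) := by
    intro k
    induction k with
    | zero => simp
    | succ k ih =>
      have hhalf : w (2 ^ k) ≤ ((2:ℝ)⁻¹) • (w 0 + w (2 ^ (k + 1))) := by
        have := hstep (2 ^ k)
        have h2 : (2 : ℕ) * 2 ^ k = 2 ^ (k + 1) := by ring
        rw [h2] at this
        have := smul_mono (c := (2:ℝ)⁻¹) (by norm_num) this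
        calc w (2 ^ k) = ((2:ℝ)⁻¹) • (w (2 ^ k) + w (2 ^ k)) := by
              rw [smul_add]
              rw [← add_smul]
              norm_num
          _ ≤ ((2:ℝ)⁻¹) • (w 0 + w (2 ^ (k + 1))) := this
      calc w 1 ≤ (1 - ((2:ℝ)⁻¹) ^ k) • w 0 + ((2:ℝ)⁻¹) ^ k • w (2 ^ k) := ih
        _ ≤ (1 - ((2:ℝ)⁻¹) ^ k) • w 0
            + ((2:ℝ)⁻¹) ^ k • (((2:ℝ)⁻¹) • (w 0 + w (2 ^ (k + 1)))) := by
              exact add_le_add_right (smul_mono (pow_nonneg (by norm_num : (0:ℝ) ≤ 2⁻¹) k) hhalf) _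
        _ = (1 - ((2:ℝ)⁻¹) ^ (k + 1)) • w 0 + ((2:ℝ)⁻¹) ^ (k + 1) • w (2 ^ (k + 1)) := by
              module
  have hfin : ∀ k : ℕ, w 1 ≤ (1 - ((2:ℝ)⁻¹) ^ k) • w 0 + ((2:ℝ)⁻¹) ^ k • (‖x‖ ^ 2 • (1 : A)) := by
    intro k
    exact (hkey k).trans
      (add_le_add_right (smul_mono (pow_nonneg (by norm_num : (0:ℝ) ≤ 2⁻¹) k) (hbound _)) _)
  have hq : Filter.Tendsto (fun k : ℕ => ((2:ℝ)⁻¹) ^ k) Filter.atTop (nhds 0) :=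
    tendsto_pow_atTop_nhds_zero_of_lt_one (by norm_num) (by norm_num)
  have hlim : Filter.Tendsto
      (fun k : ℕ => (1 - ((2:ℝ)⁻¹) ^ k) • w 0 + ((2:ℝ)⁻¹) ^ k • (‖x‖ ^ 2 • (1 : A)))
      Filter.atTop (nhds (w 0)) := by
    have h1 : Filter.Tendsto (fun k : ℕ => (1 - ((2:ℝ)⁻¹) ^ k) • w 0)
        Filter.atTop (nhds ((1 - 0 : ℝ) • w 0)) :=
      ((tendsto_const_nhds.sub hq).smul_const (w 0))
    have h2 : Filter.Tendsto (fun k : ℕ => ((2:ℝ)⁻¹) ^ k • (‖x‖ ^ 2 • (1 : A)))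
        Filter.atTop (nhds ((0:ℝ) • (‖x‖ ^ 2 • (1 : A)))) :=
      hq.smul_const _
    have := h1.add h2
    simpa using this
  have : w 1 ≤ w 0 := ge_of_tendsto hlim (Filter.Eventually.of_forall hfin)
  rw [hw0] at this
  calc (inner A x (S x) : A) = w 1 := by rw [hw]; dsimp only; rw [pow_one]
    _ ≤ inner A x x := this

/-- If `T'` is an adjoint of `T`, then `⟪T' x, T' x⟫ ≤ ‖T‖ ^ 2 • ⟪x, x⟫`. -/
lemma adjoint_inner_le (T T' : H →L[ℂ] H)
    (h : ∀ u v : H, (inner A (T u) v : A) = inner A u (T' v)) (x : H) :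
    (inner A (T' x) (T' x) : A) ≤ ‖T‖ ^ 2 • inner A x x := by
  have h' : ∀ u v : H, (inner A (T' u) v : A) = inner A u (T v) := by
    intro u v
    calc (inner A (T' u) v : A) = star (inner A v (T' u) : A) := (CStarModuleOld.star_inner _ _).symm
      _ = star (inner A (T v) u : A) := by rw [h]
      _ = inner A u (T v) := CStarModuleOld.star_inner _ _
  have hTT' : ∀ u : H, (inner A (T' u) (T' u) : A) = inner A u (T (T' u)) := fun u =>
    h' u (T' u)
  rcases eq_or_ne ‖T‖ 0 with hT0 | hT0
  · have hT : T = 0 := norm_eq_zero.mp hT0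
    have : (inner A (T' x) (T' x) : A) = 0 := by
      rw [hTT' x, hT]
      simp
    rw [this, hT0]
    simp
  · have hTpos : 0 < ‖T‖ := lt_of_le_of_ne (norm_nonneg T) (Ne.symm hT0)
    have hT'le : ∀ u : H, ‖T' u‖ ≤ ‖T‖ * ‖u‖ := by
      intro u
      rcases eq_or_ne (‖T' u‖) 0 with h0 | h0
      · rw [h0]; positivity
      · have hsq : ‖T' u‖ ^ 2 = ‖(inner A (T' u) (T' u) : A)‖ := CStarModuleOld.norm_sq_eq
        have : ‖T' u‖ ^ 2 ≤ ‖u‖ * (‖T‖ * ‖T' u‖) := by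
          rw [hsq, hTT' u]
          calc ‖(inner A u (T (T' u)) : A)‖ ≤ ‖u‖ * ‖T (T' u)‖ := CStarModuleOld.norm_inner_le H
            _ ≤ ‖u‖ * (‖T‖ * ‖T' u‖) :=
                mul_le_mul_of_nonneg_left (T.le_opNorm _) (norm_nonneg u)
        have hpos : 0 < ‖T' u‖ := lt_of_le_of_ne (norm_nonneg _) (Ne.symm h0)
        nlinarith [norm_nonneg u]
    have hsym : ∀ u v : H,
        (inner A (((‖T‖ ^ 2)⁻¹ • (T.comp T')) u) v : A) = inner A u (((‖T‖ ^ 2)⁻¹ • (T.comp T')) v) := by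
      intro u v
      simp only [ContinuousLinearMap.smul_apply, ContinuousLinearMap.comp_apply]
      rw [CStarModuleOld.inner_smul_left_real, CStarModuleOld.inner_smul_right_real]
      congr 1
      calc (inner A (T (T' u)) v : A) = inner A (T' u) (T' v) := h _ _
        _ = inner A u (T (T' v)) := h' _ _
    have hSnorm : ‖(‖T‖ ^ 2)⁻¹ • (T.comp T')‖ ≤ 1 := by
      have hcomp : ‖T.comp T'‖ ≤ ‖T‖ ^ 2 := by
        apply ContinuousLinearMap.opNorm_le_bound _ (by positivity)
        intro u
        calc ‖T (T' u)‖ ≤ ‖T‖ * ‖T' u‖ := T.le_opNorm _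
          _ ≤ ‖T‖ * (‖T‖ * ‖u‖) := mul_le_mul_of_nonneg_left (hT'le u) (norm_nonneg T)
          _ = ‖T‖ ^ 2 * ‖u‖ := by ring
      calc ‖(‖T‖ ^ 2)⁻¹ • T.comp T'‖ ≤ ‖(‖T‖ ^ 2)⁻¹‖ * ‖T.comp T'‖ :=
            ContinuousLinearMap.opNorm_smul_le _ _
        _ = (‖T‖ ^ 2)⁻¹ * ‖T.comp T'‖ := by
            rw [Real.norm_eq_abs, abs_of_nonneg (by positivity)]
        _ ≤ (‖T‖ ^ 2)⁻¹ * ‖T‖ ^ 2 := by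
            apply mul_le_mul_of_nonneg_left hcomp (by positivity)
        _ = 1 := inv_mul_cancel₀ (by positivity)
    have hcore := inner_contraction ((‖T‖ ^ 2)⁻¹ • (T.comp T')) hsym hSnorm x
    have hSx : (inner A x (((‖T‖ ^ 2)⁻¹ • (T.comp T')) x) : A)
        = (‖T‖ ^ 2)⁻¹ • (inner A (T' x) (T' x) : A) := by
      simp only [ContinuousLinearMap.smul_apply, ContinuousLinearMap.comp_apply]
      rw [CStarModuleOld.inner_smul_right_real]
      congr 1
      exact (hTT' x).symm
    rw [hSx] at hcore
    have := smul_mono (c := ‖T‖ ^ 2) (by positivity) hcore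
    rwa [smul_smul, mul_inv_cancel₀ (by positivity), one_smul] at this

end AuxCKGFF

/-- if `{UW_j, Λ_jP_{W_j}U*, v_j}` is a `(C,C')`-controlled `K`-g-fusion
frame with bounds `A, B`, `U` invertible with `U*U W_j ⊆ W_j` commuting with `C, C'`,
then `{W_j, Λ_j, v_j}` is a `(C,C')`-controlled `U⁻¹KU`-g-fusion frame with bounds
`A/‖U‖²` and `B‖U⁻¹‖²`. -/
theorem controlled_K_g_fusion_frame_preimage
    (C C' : H →L[ℂ] H) (P : J → H →L[ℂ] H) (Λ : ∀ j, H →L[ℂ] Hs j)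
    (Λad : ∀ j, Hs j →L[ℂ] H) (v : J → A)
    (hΛad : ∀ (j) (x : H) (u : Hs j), (inner A (Λ j x) u : A) = inner A x (Λad j u))
    (hP_idem : ∀ j, (P j).comp (P j) = P j)
    (hP_sa : ∀ (j) (f g : H), (inner A (P j f) g : A) = inner A f (P j g))
    (hC_sa : ∀ f g : H, (inner A (C f) g : A) = inner A f (C g))
    (hC'_sa : ∀ f g : H, (inner A (C' f) g : A) = inner A f (C' g))
    (hC_pos : ∀ f : H, 0 ≤ (inner A (C f) f : A))
    (hC'_pos : ∀ f : H, 0 ≤ (inner A (C' f) f : A))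
    (hC_inv : Function.Bijective C) (hC'_inv : Function.Bijective C')
    (hCC' : C.comp C' = C'.comp C)
    (hCT : ∀ j, C.comp ((P j).comp ((Λad j).comp ((Λ j).comp (P j))))
      = ((P j).comp ((Λad j).comp ((Λ j).comp (P j)))).comp C)
    (hC'T : ∀ j, C'.comp ((P j).comp ((Λad j).comp ((Λ j).comp (P j))))
      = ((P j).comp ((Λad j).comp ((Λ j).comp (P j)))).comp C')
    (hv_pos : ∀ j, 0 ≤ v j) (hv_inv : ∀ j, IsUnit (v j))
    (hv_central : ∀ (j) (a : A), Commute (v j) a)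
    (K Kad : H →L[ℂ] H)
    (hKad : ∀ x y : H, (inner A (K x) y : A) = inner A x (Kad y))
    (U Uad : H →L[ℂ] H)
    (hUad : ∀ x y : H, (inner A (U x) y : A) = inner A x (Uad y))
    (Uinv Uinvad : H →L[ℂ] H)
    (hUinv₁ : U.comp Uinv = ContinuousLinearMap.id ℂ H)
    (hUinv₂ : Uinv.comp U = ContinuousLinearMap.id ℂ H)
    (hUinvad : ∀ x y : H, (inner A (Uinv x) y : A) = inner A x (Uinvad y))
    (hUW : ∀ (j) (x : H), x ∈ Set.range (P j) → Uad (U x) ∈ Set.range (P j))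
    (hUC : U.comp C = C.comp U) (hUC' : U.comp C' = C'.comp U)
    (Q : J → H →L[ℂ] H)
    (hQ_idem : ∀ j, (Q j).comp (Q j) = Q j)
    (hQ_sa : ∀ (j) (f g : H), (inner A (Q j f) g : A) = inner A f (Q j g))
    (hQ_range : ∀ j, Set.range (Q j) = U '' Set.range (P j))
    (a b : ℝ) (ha : 0 < a) (hb : 0 < b)
    (hsumQ : ∀ f : H, Summable fun j => v j * v j *
      (inner A (Λ j (P j (Uad (Q j (C f))))) (Λ j (P j (Uad (Q j (C' f))))) : A))
    (hframeQ : ∀ f : H,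
      a • (inner A (Kad f) (Kad f) : A) ≤
        (∑' j, v j * v j *
          (inner A (Λ j (P j (Uad (Q j (C f))))) (Λ j (P j (Uad (Q j (C' f))))) : A)) ∧
      (∑' j, v j * v j *
        (inner A (Λ j (P j (Uad (Q j (C f))))) (Λ j (P j (Uad (Q j (C' f))))) : A)) ≤
        b • (inner A f f : A)) :
    ∀ f : H,
      Summable (fun j => v j * v j *
        (inner A (Λ j (P j (C f))) (Λ j (P j (C' f))) : A)) ∧
      (a / ‖U‖ ^ 2) • (inner A (Uad (Kad (Uinvad f))) (Uad (Kad (Uinvad f))) : A) ≤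
        (∑' j, v j * v j * (inner A (Λ j (P j (C f))) (Λ j (P j (C' f))) : A)) ∧
      (∑' j, v j * v j * (inner A (Λ j (P j (C f))) (Λ j (P j (C' f))) : A)) ≤
        (b * ‖Uinv‖ ^ 2) • (inner A f f : A) := by
  intro f
  have hUad' : ∀ u z : H, (inner A (Uad u) z : A) = inner A u (U z) := by
    intro u z
    calc (inner A (Uad u) z : A) = star (inner A z (Uad u) : A) := (CStarModuleOld.star_inner _ _).symm
      _ = star (inner A (U z) u : A) := by rw [hUad]
      _ = inner A u (U z) := CStarModuleOld.star_inner _ _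
  have hUinvad' : ∀ u z : H, (inner A (Uinvad u) z : A) = inner A u (Uinv z) := by
    intro u z
    calc (inner A (Uinvad u) z : A) = star (inner A z (Uinvad u) : A) :=
          (CStarModuleOld.star_inner _ _).symm
      _ = star (inner A (Uinv z) u : A) := by rw [hUinvad]
      _ = inner A u (Uinv z) := CStarModuleOld.star_inner _ _
  have hPUQ : ∀ (j) (y : H), P j (Uad (Q j y)) = P j (Uad y) := by
    intro j y
    apply AuxCKGFF.inner_ext (A := A)
    intro z
    obtain ⟨w, hw⟩ : U (P j z) ∈ Set.range (Q j) := by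
      rw [hQ_range j]
      exact ⟨P j z, ⟨z, rfl⟩, rfl⟩
    have hQQ : Q j (Q j w) = Q j w := by
      have := congrArg (fun (T : H →L[ℂ] H) => T w) (hQ_idem j)
      simpa using this
    calc (inner A (P j (Uad (Q j y))) z : A)
        = inner A (Uad (Q j y)) (P j z) := hP_sa j _ z
      _ = inner A (Q j y) (U (P j z)) := hUad' _ _
      _ = inner A (Q j y) (Q j w) := by rw [hw]
      _ = inner A y (Q j (Q j w)) := hQ_sa j y (Q j w)
      _ = inner A y (Q j w) := by rw [hQQ]
      _ = inner A y (U (P j z)) := by rw [hw]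
      _ = inner A (Uad y) (P j z) := (hUad' _ _).symm
      _ = inner A (P j (Uad y)) z := (hP_sa j _ z).symm
  have hUCpt : ∀ z : H, U (C z) = C (U z) := by
    intro z
    have := congrArg (fun (T : H →L[ℂ] H) => T z) hUC
    simpa using this
  have hUC'pt : ∀ z : H, U (C' z) = C' (U z) := by
    intro z
    have := congrArg (fun (T : H →L[ℂ] H) => T z) hUC'
    simpa using this
  have hUadC : ∀ y : H, Uad (C y) = C (Uad y) := by
    intro y
    apply AuxCKGFF.inner_ext (A := A)
    intro z
    calc (inner A (Uad (C y)) z : A) = inner A (C y) (U z) := hUad' _ _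
      _ = inner A y (C (U z)) := hC_sa y (U z)
      _ = inner A y (U (C z)) := by rw [hUCpt]
      _ = inner A (Uad y) (C z) := (hUad' _ _).symm
      _ = inner A (C (Uad y)) z := (hC_sa _ _).symm
  have hUadC' : ∀ y : H, Uad (C' y) = C' (Uad y) := by
    intro y
    apply AuxCKGFF.inner_ext (A := A)
    intro z
    calc (inner A (Uad (C' y)) z : A) = inner A (C' y) (U z) := hUad' _ _
      _ = inner A y (C' (U z)) := hC'_sa y (U z)
      _ = inner A y (U (C' z)) := by rw [hUC'pt]
      _ = inner A (Uad y) (C' z) := (hUad' _ _).symm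
      _ = inner A (C' (Uad y)) z := (hC'_sa _ _).symm
  have hUadUinvad : Uad (Uinvad f) = f := by
    apply AuxCKGFF.inner_ext (A := A)
    intro z
    calc (inner A (Uad (Uinvad f)) z : A) = inner A (Uinvad f) (U z) := hUad' _ _
      _ = inner A f (Uinv (U z)) := hUinvad' _ _
      _ = inner A f z := by
          have := congrArg (fun (T : H →L[ℂ] H) => T z) hUinv₂
          simp only [ContinuousLinearMap.comp_apply, ContinuousLinearMap.id_apply] at this
          rw [this]
  have hterm : ∀ j : J, P j (Uad (Q j (C (Uinvad f)))) = P j (C f) := by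
    intro j
    rw [hPUQ, hUadC, hUadUinvad]
  have hterm' : ∀ j : J, P j (Uad (Q j (C' (Uinvad f)))) = P j (C' f) := by
    intro j
    rw [hPUQ, hUadC', hUadUinvad]
  have hfun : (fun j => v j * v j *
      (inner A (Λ j (P j (Uad (Q j (C (Uinvad f))))))
        (Λ j (P j (Uad (Q j (C' (Uinvad f)))))) : A))
      = fun j => v j * v j * (inner A (Λ j (P j (C f))) (Λ j (P j (C' f))) : A) := by
    funext j
    rw [hterm j, hterm' j]
  have hsum : Summable (fun j => v j * v j *
      (inner A (Λ j (P j (C f))) (Λ j (P j (C' f))) : A)) := by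
    rw [← hfun]
    exact hsumQ (Uinvad f)
  have htsum : (∑' j, v j * v j * (inner A (Λ j (P j (C f))) (Λ j (P j (C' f))) : A))
      = ∑' j, v j * v j *
        (inner A (Λ j (P j (Uad (Q j (C (Uinvad f))))))
          (Λ j (P j (Uad (Q j (C' (Uinvad f)))))) : A) := by
    rw [hfun]
  refine ⟨hsum, ?_, ?_⟩
  · rcases eq_or_ne ‖U‖ 0 with hU0 | hU0
    · have hzero : ∀ z : H, z = 0 := by
        intro z
        have h1 : U (Uinv z) = z := by
          have := congrArg (fun (T : H →L[ℂ] H) => T z) hUinv₁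
          simpa using this
        rw [norm_eq_zero.mp hU0] at h1
        simpa using h1.symm
      have hfz : (fun j => v j * v j *
          (inner A (Λ j (P j (C f))) (Λ j (P j (C' f))) : A)) = fun _ => 0 := by
        funext j
        rw [hzero (P j (C f)), hzero (P j (C' f))]
        simp
      have ht0 : (∑' j, v j * v j *
          (inner A (Λ j (P j (C f))) (Λ j (P j (C' f))) : A)) = 0 := by
        rw [hfz, tsum_zero]
      rw [ht0, hzero (Uad (Kad (Uinvad f)))]
      simp
    · rw [htsum]
      have h1 := (hframeQ (Uinvad f)).1
      have h2 := AuxCKGFF.adjoint_inner_le U Uad hUad (Kad (Uinvad f))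
      calc (a / ‖U‖ ^ 2) • (inner A (Uad (Kad (Uinvad f))) (Uad (Kad (Uinvad f))) : A)
          ≤ (a / ‖U‖ ^ 2) • (‖U‖ ^ 2 • (inner A (Kad (Uinvad f)) (Kad (Uinvad f)) : A)) :=
            AuxCKGFF.smul_mono (by positivity) h2
        _ = a • (inner A (Kad (Uinvad f)) (Kad (Uinvad f)) : A) := by
            rw [smul_smul, div_mul_cancel₀ a (pow_ne_zero 2 hU0)]
        _ ≤ _ := h1
  · rw [htsum]
    have h3 := (hframeQ (Uinvad f)).2
    have h4 := AuxCKGFF.adjoint_inner_le Uinv Uinvad hUinvad f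
    calc (∑' j, v j * v j *
        (inner A (Λ j (P j (Uad (Q j (C (Uinvad f))))))
          (Λ j (P j (Uad (Q j (C' (Uinvad f)))))) : A))
        ≤ b • (inner A (Uinvad f) (Uinvad f) : A) := h3
      _ ≤ b • (‖Uinv‖ ^ 2 • (inner A f f : A)) := AuxCKGFF.smul_mono hb.le h4
      _ = (b * ‖Uinv‖ ^ 2) • (inner A f f : A) := smul_smul _ _ _
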